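/- If the smallness condition max{M₁,M₂,M₃}·(12ζ⁴(‖f₁‖+‖f₂‖+‖f₃‖) + 2ζ²·Pr·Re·‖f₃‖) < 1 holds, then the reduced HDG system admits exactly one solution (U,B,T) ∈ V×W×Z. (Abstract finite-dimensional version of Lemma 4.4 combined with the existence assertion of Lemma 4.3.) -/

import Mathlib

set_option maxHeartbeats 2000000

lemma coercive_existsUnique {X : Type*} [NormedAddCommGroup X] [NormedSpace ℝ X]
    [FiniteDimensional ℝ X] (b : X →ₗ[ℝ] X →ₗ[ℝ] ℝ) (c : ℝ) (hc : 0 < c)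
    (hco : ∀ x, c * ‖x‖ ^ 2 ≤ b x x) (f : X →ₗ[ℝ] ℝ) :
    ∃! x : X, ∀ y, b x y = f y := by
  have hinj : Function.Injective b := by
    rw [← LinearMap.ker_eq_bot, LinearMap.ker_eq_bot']
    intro x hx
    have h1 := hco x
    rw [hx] at h1
    simp only [LinearMap.zero_apply] at h1
    have h2 : ‖x‖ ^ 2 ≤ 0 := by nlinarith [sq_nonneg ‖x‖]
    have h3 : ‖x‖ = 0 := by nlinarith [norm_nonneg x, sq_nonneg ‖x‖]
    exact norm_eq_zero.mp h3
  have hsurj : Function.Surjective b := by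
    have hdim : Module.finrank ℝ X = Module.finrank ℝ (X →ₗ[ℝ] ℝ) :=
      (Module.finrank_linearMap_self ℝ ℝ X).symm
    exact (LinearMap.injective_iff_surjective_of_finrank_eq_finrank hdim).mp hinj
  obtain ⟨x, hx⟩ := hsurj f
  refine ⟨x, fun y => by rw [hx], fun x' hx' => hinj ?_⟩
  rw [hx]; exact LinearMap.ext hx'

lemma sq_le_linear' {P t C : ℝ} (hP : 0 < P) (ht : 0 ≤ t) (hC : 0 ≤ C)
    (h : P⁻¹ * t ^ 2 ≤ C * t) : t ≤ P * C := by
  by_contra hcon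
  push_neg at hcon
  have h' : t ^ 2 ≤ P * (C * t) := by
    have := mul_le_mul_of_nonneg_left h hP.le
    calc t ^ 2 = P * (P⁻¹ * t ^ 2) := by field_simp
    _ ≤ P * (C * t) := this
  have ht0 : 0 < t := lt_of_le_of_lt (by positivity) hcon
  nlinarith [mul_lt_mul_of_pos_right hcon ht0]
lemma quad_comp_bound {Ha Rm p q X Y : ℝ} (hHa : 0 < Ha) (hRm : 0 < Rm)
    (hX : 0 ≤ X) (hY : 0 ≤ Y) (hp : 0 ≤ p) (hq : 0 ≤ q)
    (h : Ha⁻¹ ^ 2 * X ^ 2 + Rm⁻¹ ^ 2 * Y ^ 2 ≤ p * X + q * Y) :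
    X ≤ Ha * (Ha * p + Rm * q) ∧ Y ≤ Rm * (Ha * p + Rm * q) := by
  have h' : Rm ^ 2 * X ^ 2 + Ha ^ 2 * Y ^ 2
      ≤ Ha ^ 2 * Rm ^ 2 * p * X + Ha ^ 2 * Rm ^ 2 * q * Y := by
    have h2 := mul_le_mul_of_nonneg_left h (by positivity : (0:ℝ) ≤ Ha ^ 2 * Rm ^ 2)
    have e : Ha ^ 2 * Rm ^ 2 * (Ha⁻¹ ^ 2 * X ^ 2 + Rm⁻¹ ^ 2 * Y ^ 2)
        = Rm ^ 2 * X ^ 2 + Ha ^ 2 * Y ^ 2 := by field_simp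
    have e2 : Ha ^ 2 * Rm ^ 2 * (p * X + q * Y)
        = Ha ^ 2 * Rm ^ 2 * p * X + Ha ^ 2 * Rm ^ 2 * q * Y := by ring
    linarith [e ▸ e2 ▸ h2]
  constructor
  · by_contra hcon; push_neg at hcon
    have hX0 : 0 < X := lt_of_le_of_lt (by positivity) hcon
    have s2 : Ha ^ 2 * Rm ^ 2 * q * Y - Ha ^ 2 * Y ^ 2 ≤ Ha ^ 2 * Rm ^ 4 * q ^ 2 / 4 := by
      nlinarith [sq_nonneg (Ha * Y - Ha * Rm ^ 2 * q / 2)]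
    have s3 : Rm ^ 2 * X ^ 2 ≤ Rm ^ 2 * (Ha ^ 2 * p * X) + Rm ^ 2 * (Ha ^ 2 * Rm ^ 2 * q ^ 2 / 4) := by
      have e3 : Rm ^ 2 * (Ha ^ 2 * p * X) = Ha ^ 2 * Rm ^ 2 * p * X := by ring
      have e4 : Rm ^ 2 * (Ha ^ 2 * Rm ^ 2 * q ^ 2 / 4) = Ha ^ 2 * Rm ^ 4 * q ^ 2 / 4 := by ring
      rw [e3, e4]; linarith
    have s4 : X ^ 2 ≤ Ha ^ 2 * p * X + Ha ^ 2 * Rm ^ 2 * q ^ 2 / 4 := by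
      have hRm2 : (0:ℝ) < Rm ^ 2 := by positivity
      have := (mul_le_mul_iff_right₀ hRm2).mp (by linarith :
        Rm ^ 2 * (X ^ 2) ≤ Rm ^ 2 * (Ha ^ 2 * p * X + Ha ^ 2 * Rm ^ 2 * q ^ 2 / 4))
      linarith
    have m1 : Ha ^ 2 * p * X + Ha * Rm * q * X < X ^ 2 := by
      have t := mul_lt_mul_of_pos_right hcon hX0
      have e1 : Ha * (Ha * p + Rm * q) * X = Ha ^ 2 * p * X + Ha * Rm * q * X := by ring
      have e2 : X * X = X ^ 2 := by ring
      linarith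
    have m2 : Ha ^ 3 * Rm * p * q + Ha ^ 2 * Rm ^ 2 * q ^ 2 ≤ Ha * Rm * q * X := by
      have t := mul_le_mul_of_nonneg_left hcon.le (show (0:ℝ) ≤ Ha * Rm * q by positivity)
      have e1 : Ha * Rm * q * (Ha * (Ha * p + Rm * q))
          = Ha ^ 3 * Rm * p * q + Ha ^ 2 * Rm ^ 2 * q ^ 2 := by ring
      linarith
    have m3 : (0:ℝ) ≤ Ha ^ 3 * Rm * p * q := by positivity
    have m4 : (0:ℝ) ≤ Ha ^ 2 * Rm ^ 2 * q ^ 2 := by positivity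
    linarith
  · by_contra hcon; push_neg at hcon
    have hY0 : 0 < Y := lt_of_le_of_lt (by positivity) hcon
    have s2 : Ha ^ 2 * Rm ^ 2 * p * X - Rm ^ 2 * X ^ 2 ≤ Rm ^ 2 * Ha ^ 4 * p ^ 2 / 4 := by
      nlinarith [sq_nonneg (Rm * X - Rm * Ha ^ 2 * p / 2)]
    have s3 : Ha ^ 2 * Y ^ 2 ≤ Ha ^ 2 * (Rm ^ 2 * q * Y) + Ha ^ 2 * (Rm ^ 2 * Ha ^ 2 * p ^ 2 / 4) := by
      have e3 : Ha ^ 2 * (Rm ^ 2 * q * Y) = Ha ^ 2 * Rm ^ 2 * q * Y := by ring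
      have e4 : Ha ^ 2 * (Rm ^ 2 * Ha ^ 2 * p ^ 2 / 4) = Rm ^ 2 * Ha ^ 4 * p ^ 2 / 4 := by ring
      rw [e3, e4]; linarith
    have s4 : Y ^ 2 ≤ Rm ^ 2 * q * Y + Rm ^ 2 * Ha ^ 2 * p ^ 2 / 4 := by
      have hHa2 : (0:ℝ) < Ha ^ 2 := by positivity
      have := (mul_le_mul_iff_right₀ hHa2).mp (by linarith :
        Ha ^ 2 * (Y ^ 2) ≤ Ha ^ 2 * (Rm ^ 2 * q * Y + Rm ^ 2 * Ha ^ 2 * p ^ 2 / 4))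
      linarith
    have m1 : Rm ^ 2 * q * Y + Ha * Rm * p * Y < Y ^ 2 := by
      have t := mul_lt_mul_of_pos_right hcon hY0
      have e1 : Rm * (Ha * p + Rm * q) * Y = Rm ^ 2 * q * Y + Ha * Rm * p * Y := by ring
      have e2 : Y * Y = Y ^ 2 := by ring
      linarith
    have m2 : Rm ^ 3 * Ha * p * q + Rm ^ 2 * Ha ^ 2 * p ^ 2 ≤ Ha * Rm * p * Y := by
      have t := mul_le_mul_of_nonneg_left hcon.le (show (0:ℝ) ≤ Ha * Rm * p by positivity)
      have e1 : Ha * Rm * p * (Rm * (Ha * p + Rm * q))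
          = Rm ^ 3 * Ha * p * q + Rm ^ 2 * Ha ^ 2 * p ^ 2 := by ring
      linarith
    have m3 : (0:ℝ) ≤ Rm ^ 3 * Ha * p * q := by positivity
    have m4 : (0:ℝ) ≤ Rm ^ 2 * Ha ^ 2 * p ^ 2 := by positivity
    linarith

lemma UB_existsUnique {V W Z : Type*}
    [NormedAddCommGroup V] [NormedSpace ℝ V] [FiniteDimensional ℝ V]
    [NormedAddCommGroup W] [NormedSpace ℝ W] [FiniteDimensional ℝ W]
    [NormedAddCommGroup Z] [NormedSpace ℝ Z]
    {Ha Rm ζ : ℝ} (hHa : 0 < Ha) (hRm : 0 < Rm)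
    (hHaζ : Ha ≤ ζ) (hRmζ : Rm ≤ ζ) (hζ0 : 0 < ζ)
    (aV : V →ₗ[ℝ] V →ₗ[ℝ] ℝ) (aW : W →ₗ[ℝ] W →ₗ[ℝ] ℝ)
    (haV_coer : ∀ v : V, Ha⁻¹ ^ 2 * ‖v‖ ^ 2 ≤ aV v v)
    (haW_coer : ∀ w : W, Rm⁻¹ ^ 2 * ‖w‖ ^ 2 ≤ aW w w)
    (c₁ : V →ₗ[ℝ] V →ₗ[ℝ] V →ₗ[ℝ] ℝ)
    (c₂ : V →ₗ[ℝ] W →ₗ[ℝ] W →ₗ[ℝ] ℝ)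
    (hc₁_skew : ∀ (φ v : V), c₁ φ v v = 0)
    (G : Z →ₗ[ℝ] V →ₗ[ℝ] ℝ)
    (f₁ : V →L[ℝ] ℝ) (f₂ : W →L[ℝ] ℝ)
    (u : V) (b : W) (T : Z) :
    ∃! y : V × W, ∀ t : V × W,
      aV y.1 t.1 + aW y.2 t.2 + c₁ u y.1 t.1 + c₂ t.1 b y.2 - c₂ y.1 b t.2
        = f₁ t.1 + f₂ t.2 - G T t.1 := by
  have hζHa2 : (ζ⁻¹) ^ 2 ≤ (Ha⁻¹) ^ 2 := by
    have h1 : ζ⁻¹ ≤ Ha⁻¹ := inv_anti₀ hHa hHaζ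
    have h2 : (0:ℝ) ≤ ζ⁻¹ := by positivity
    exact pow_le_pow_left₀ h2 h1 2
  have hζRm2 : (ζ⁻¹) ^ 2 ≤ (Rm⁻¹) ^ 2 := by
    have h1 : ζ⁻¹ ≤ Rm⁻¹ := inv_anti₀ hRm hRmζ
    have h2 : (0:ℝ) ≤ ζ⁻¹ := by positivity
    exact pow_le_pow_left₀ h2 h1 2
  set t5 : (V × W) →ₗ[ℝ] (V × W) →ₗ[ℝ] ℝ :=
    ((c₂.flip b).comp (LinearMap.fst ℝ V W)).compl₂ (LinearMap.snd ℝ V W) with ht5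
  set Bf : (V × W) →ₗ[ℝ] (V × W) →ₗ[ℝ] ℝ :=
    (aV.comp (LinearMap.fst ℝ V W)).compl₂ (LinearMap.fst ℝ V W)
    + (aW.comp (LinearMap.snd ℝ V W)).compl₂ (LinearMap.snd ℝ V W)
    + ((c₁ u).comp (LinearMap.fst ℝ V W)).compl₂ (LinearMap.fst ℝ V W)
    + t5.flip - t5 with hBf
  set Lf : (V × W) →ₗ[ℝ] ℝ :=
    (f₁ : V →ₗ[ℝ] ℝ).comp (LinearMap.fst ℝ V W)
    + (f₂ : W →ₗ[ℝ] ℝ).comp (LinearMap.snd ℝ V W)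
    - (G T).comp (LinearMap.fst ℝ V W) with hLf
  have hBapp : ∀ y t : V × W, Bf y t
      = aV y.1 t.1 + aW y.2 t.2 + c₁ u y.1 t.1 + c₂ t.1 b y.2 - c₂ y.1 b t.2 := by
    intro y t
    simp [hBf, ht5, LinearMap.compl₂_apply, LinearMap.flip_apply]
  have hLapp : ∀ t : V × W, Lf t = f₁ t.1 + f₂ t.2 - G T t.1 := by
    intro t; simp [hLf]
  have hco : ∀ y : V × W, (ζ⁻¹) ^ 2 * ‖y‖ ^ 2 ≤ Bf y y := by
    intro y
    have h1 : Bf y y = aV y.1 y.1 + aW y.2 y.2 := by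
      rw [hBapp]; rw [hc₁_skew]; ring
    rw [h1, Prod.norm_def]
    have hV := haV_coer y.1
    have hW := haW_coer y.2
    have k1 := mul_le_mul_of_nonneg_right hζHa2 (sq_nonneg ‖y.1‖)
    have k2 := mul_le_mul_of_nonneg_right hζRm2 (sq_nonneg ‖y.2‖)
    have k3 : (0:ℝ) ≤ Rm⁻¹ ^ 2 * ‖y.2‖ ^ 2 := by positivity
    have k4 : (0:ℝ) ≤ Ha⁻¹ ^ 2 * ‖y.1‖ ^ 2 := by positivity
    rcases max_cases ‖y.1‖ ‖y.2‖ with ⟨hm, _⟩ | ⟨hm, _⟩ <;> rw [hm] <;> linarith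
  obtain ⟨y, hy, hyu⟩ := coercive_existsUnique Bf ((ζ⁻¹) ^ 2) (by positivity) hco Lf
  exact ⟨y, fun t => by rw [← hBapp, ← hLapp]; exact hy t,
    fun y' hy' => hyu y' (fun t => by rw [hBapp, hLapp]; exact hy' t)⟩

/-- Abstract finite-dimensional version of Lemma 4.4 combined with the
existence assertion of Lemma 4.3: under the smallness condition, the reduced
HDG system admits exactly one solution `(U,B,T)`. -/
theorem reduced_HDG_existence_uniqueness_small_data
    {V W Z : Type*}
    [NormedAddCommGroup V] [InnerProductSpace ℝ V] [FiniteDimensional ℝ V]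
    [NormedAddCommGroup W] [InnerProductSpace ℝ W] [FiniteDimensional ℝ W]
    [NormedAddCommGroup Z] [InnerProductSpace ℝ Z] [FiniteDimensional ℝ Z]
    (Ha Rm Pr Re γ ζ : ℝ)
    (hHa : 0 < Ha) (hRm : 0 < Rm) (hPr : 0 < Pr) (hRe : 0 < Re) (hγ : 0 < γ)
    (hζ : ζ = max (max Ha Rm) (Ha * Pr * Re * γ))
    (aV : V →ₗ[ℝ] V →ₗ[ℝ] ℝ) (aW : W →ₗ[ℝ] W →ₗ[ℝ] ℝ) (aZ : Z →ₗ[ℝ] Z →ₗ[ℝ] ℝ)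
    (haV_symm : ∀ v₁ v₂ : V, aV v₁ v₂ = aV v₂ v₁)
    (haW_symm : ∀ w₁ w₂ : W, aW w₁ w₂ = aW w₂ w₁)
    (haZ_symm : ∀ z₁ z₂ : Z, aZ z₁ z₂ = aZ z₂ z₁)
    (haV_coer : ∀ v : V, Ha⁻¹ ^ 2 * ‖v‖ ^ 2 ≤ aV v v)
    (haW_coer : ∀ w : W, Rm⁻¹ ^ 2 * ‖w‖ ^ 2 ≤ aW w w)
    (haZ_coer : ∀ z : Z, (Pr * Re)⁻¹ * ‖z‖ ^ 2 ≤ aZ z z)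
    (M₁ M₂ M₃ : ℝ) (hM₁ : 0 ≤ M₁) (hM₂ : 0 ≤ M₂) (hM₃ : 0 ≤ M₃)
    (c₁ : V →ₗ[ℝ] V →ₗ[ℝ] V →ₗ[ℝ] ℝ)
    (c₂ : V →ₗ[ℝ] W →ₗ[ℝ] W →ₗ[ℝ] ℝ)
    (c₃ : V →ₗ[ℝ] Z →ₗ[ℝ] Z →ₗ[ℝ] ℝ)
    (hc₁_bound : ∀ (φ u v : V), |c₁ φ u v| ≤ M₁ * ‖φ‖ * ‖u‖ * ‖v‖)
    (hc₂_bound : ∀ (v : V) (B w : W), |c₂ v B w| ≤ M₂ * ‖v‖ * ‖B‖ * ‖w‖)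
    (hc₃_bound : ∀ (u : V) (T z : Z), |c₃ u T z| ≤ M₃ * ‖u‖ * ‖T‖ * ‖z‖)
    (hc₁_skew : ∀ (φ v : V), c₁ φ v v = 0)
    (hc₃_skew : ∀ (u : V) (z : Z), c₃ u z z = 0)
    (G : Z →ₗ[ℝ] V →ₗ[ℝ] ℝ)
    (hG_bound : ∀ (T : Z) (v : V), |G T v| ≤ γ * ‖T‖ * ‖v‖)
    (f₁ : V →L[ℝ] ℝ) (f₂ : W →L[ℝ] ℝ) (f₃ : Z →L[ℝ] ℝ)
    (hsmall : max (max M₁ M₂) M₃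
        * (12 * ζ ^ 4 * (‖f₁‖ + ‖f₂‖ + ‖f₃‖) + 2 * ζ ^ 2 * Pr * Re * ‖f₃‖) < 1) :
    ∃! ubt : V × W × Z,
      (∀ (v : V) (w : W),
        aV ubt.1 v + aW ubt.2.1 w + c₁ ubt.1 ubt.1 v + c₂ v ubt.2.1 ubt.2.1
            - c₂ ubt.1 ubt.2.1 w
          = f₁ v + f₂ w - G ubt.2.2 v) ∧
      (∀ z : Z, aZ ubt.2.2 z + c₃ ubt.1 ubt.2.2 z = f₃ z) := by
  have hHaζ : Ha ≤ ζ := by rw [hζ]; exact le_max_of_le_left (le_max_left _ _)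
  have hRmζ : Rm ≤ ζ := by rw [hζ]; exact le_max_of_le_left (le_max_right _ _)
  have hHγζ : Ha * Pr * Re * γ ≤ ζ := by rw [hζ]; exact le_max_right _ _
  have hζ0 : 0 < ζ := lt_of_lt_of_le hHa hHaζ
  have hPR : (0:ℝ) < (Pr * Re)⁻¹ := by positivity
  have hTex : ∀ u : V, ∃! T : Z, ∀ z : Z, aZ T z + c₃ u T z = f₃ z := by
    intro u
    obtain ⟨T, hT, hTu⟩ := coercive_existsUnique (aZ + c₃ u) ((Pr * Re)⁻¹) hPR
      (fun z => by simpa [LinearMap.add_apply, hc₃_skew] using haZ_coer z)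
      (f₃ : Z →ₗ[ℝ] ℝ)
    exact ⟨T, fun z => by simpa [LinearMap.add_apply] using hT z,
      fun T' hT' => hTu T' (fun z => by simpa [LinearMap.add_apply] using hT' z)⟩
  choose 𝒯 h𝒯 h𝒯u using hTex
  have hTb : ∀ u : V, ‖𝒯 u‖ ≤ Pr * Re * ‖f₃‖ := by
    intro u
    have h2 : aZ (𝒯 u) (𝒯 u) = f₃ (𝒯 u) := by
      have h1 := h𝒯 u (𝒯 u)
      have h5 := hc₃_skew u (𝒯 u); linarith
    have h3 : (Pr * Re)⁻¹ * ‖𝒯 u‖ ^ 2 ≤ ‖f₃‖ * ‖𝒯 u‖ := by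
      calc (Pr * Re)⁻¹ * ‖𝒯 u‖ ^ 2 ≤ aZ (𝒯 u) (𝒯 u) := haZ_coer _
      _ = f₃ (𝒯 u) := h2
      _ ≤ |f₃ (𝒯 u)| := le_abs_self _
      _ ≤ ‖f₃‖ * ‖𝒯 u‖ := by
          simpa [Real.norm_eq_abs] using f₃.le_opNorm (𝒯 u)
    exact sq_le_linear' (by positivity) (norm_nonneg _) (norm_nonneg _) h3
  have hTlip : ∀ u u' : V,
      ‖𝒯 u - 𝒯 u'‖ ≤ Pr * Re * (M₃ * ‖u - u'‖ * ‖𝒯 u'‖) := by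
    intro u u'
    have hdiff : aZ (𝒯 u - 𝒯 u') (𝒯 u - 𝒯 u')
        = - c₃ (u - u') (𝒯 u') (𝒯 u - 𝒯 u') := by
      have e1 := h𝒯 u (𝒯 u - 𝒯 u')
      have e2 := h𝒯 u' (𝒯 u - 𝒯 u')
      have e3 := hc₃_skew u (𝒯 u - 𝒯 u')
      simp only [map_sub, LinearMap.sub_apply] at e1 e2 e3 ⊢
      linarith
    have h3 : (Pr * Re)⁻¹ * ‖𝒯 u - 𝒯 u'‖ ^ 2
        ≤ (M₃ * ‖u - u'‖ * ‖𝒯 u'‖) * ‖𝒯 u - 𝒯 u'‖ := by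
      calc (Pr * Re)⁻¹ * ‖𝒯 u - 𝒯 u'‖ ^ 2 ≤ aZ (𝒯 u - 𝒯 u') (𝒯 u - 𝒯 u') := haZ_coer _
      _ = - c₃ (u - u') (𝒯 u') (𝒯 u - 𝒯 u') := hdiff
      _ ≤ |c₃ (u - u') (𝒯 u') (𝒯 u - 𝒯 u')| := neg_le_abs _
      _ ≤ M₃ * ‖u - u'‖ * ‖𝒯 u'‖ * ‖𝒯 u - 𝒯 u'‖ := hc₃_bound _ _ _
    exact sq_le_linear' (by positivity) (norm_nonneg _)
      (by have := norm_nonneg (u - u'); have := norm_nonneg (𝒯 u');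
          exact mul_nonneg (mul_nonneg hM₃ (norm_nonneg _)) (norm_nonneg _)) h3
  have hUBex : ∀ x : V × W, ∃! y : V × W, ∀ t : V × W,
      aV y.1 t.1 + aW y.2 t.2 + c₁ x.1 y.1 t.1 + c₂ t.1 x.2 y.2 - c₂ y.1 x.2 t.2
        = f₁ t.1 + f₂ t.2 - G (𝒯 x.1) t.1 := fun x =>
    UB_existsUnique hHa hRm hHaζ hRmζ hζ0 aV aW haV_coer haW_coer c₁ c₂ hc₁_skew
      G f₁ f₂ x.1 x.2 (𝒯 x.1)
  choose Φ hΦ hΦu using hUBex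
  have hf₁0 : (0:ℝ) ≤ ‖f₁‖ := norm_nonneg _
  have hf₂0 : (0:ℝ) ≤ ‖f₂‖ := norm_nonneg _
  have hf₃0 : (0:ℝ) ≤ ‖f₃‖ := norm_nonneg _
  have hF0 : (0:ℝ) ≤ ‖f₁‖ + ‖f₂‖ + ‖f₃‖ := by positivity
  have hM₁x : M₁ ≤ max (max M₁ M₂) M₃ := le_max_of_le_left (le_max_left _ _)
  have hM₂x : M₂ ≤ max (max M₁ M₂) M₃ := le_max_of_le_left (le_max_right _ _)
  have hM₃x : M₃ ≤ max (max M₁ M₂) M₃ := le_max_right _ _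
  have hMx0 : (0:ℝ) ≤ max (max M₁ M₂) M₃ := hM₁.trans hM₁x
  -- a priori bound on outputs of Φ
  have hρ : ∀ x : V × W, ‖(Φ x).1‖ ≤ ζ ^ 2 * (‖f₁‖ + ‖f₂‖ + ‖f₃‖)
      ∧ ‖(Φ x).2‖ ≤ ζ ^ 2 * (‖f₁‖ + ‖f₂‖ + ‖f₃‖) := by
    intro x
    have h1 : aV (Φ x).1 (Φ x).1 + aW (Φ x).2 (Φ x).2
        = f₁ (Φ x).1 + f₂ (Φ x).2 - G (𝒯 x.1) (Φ x).1 := by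
      have he := hΦ x (Φ x)
      have h5 := hc₁_skew x.1 (Φ x).1
      linarith
    have hen : Ha⁻¹ ^ 2 * ‖(Φ x).1‖ ^ 2 + Rm⁻¹ ^ 2 * ‖(Φ x).2‖ ^ 2
        ≤ (‖f₁‖ + γ * (Pr * Re * ‖f₃‖)) * ‖(Φ x).1‖ + ‖f₂‖ * ‖(Φ x).2‖ := by
      have hf1 : f₁ (Φ x).1 ≤ ‖f₁‖ * ‖(Φ x).1‖ :=
        (le_abs_self _).trans (by simpa [Real.norm_eq_abs] using f₁.le_opNorm (Φ x).1)
      have hf2 : f₂ (Φ x).2 ≤ ‖f₂‖ * ‖(Φ x).2‖ :=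
        (le_abs_self _).trans (by simpa [Real.norm_eq_abs] using f₂.le_opNorm (Φ x).2)
      have hg : -G (𝒯 x.1) (Φ x).1 ≤ γ * (Pr * Re * ‖f₃‖) * ‖(Φ x).1‖ := by
        calc -G (𝒯 x.1) (Φ x).1 ≤ γ * ‖𝒯 x.1‖ * ‖(Φ x).1‖ :=
              (neg_le_abs _).trans (hG_bound _ _)
        _ ≤ γ * (Pr * Re * ‖f₃‖) * ‖(Φ x).1‖ :=
            mul_le_mul_of_nonneg_right
              (mul_le_mul_of_nonneg_left (hTb x.1) hγ.le) (norm_nonneg _)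
      have er : (‖f₁‖ + γ * (Pr * Re * ‖f₃‖)) * ‖(Φ x).1‖
          = ‖f₁‖ * ‖(Φ x).1‖ + γ * (Pr * Re * ‖f₃‖) * ‖(Φ x).1‖ := by ring
      have hcV := haV_coer (Φ x).1
      have hcW := haW_coer (Φ x).2
      linarith
    have hq := quad_comp_bound hHa hRm (norm_nonneg _) (norm_nonneg _)
      (by positivity) hf₂0 hen
    have k1 : Ha * Ha * ‖f₁‖ ≤ ζ * ζ * ‖f₁‖ :=
      mul_le_mul_of_nonneg_right (mul_le_mul hHaζ hHaζ hHa.le (hHa.le.trans hHaζ)) hf₁0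
    have k1' : Rm * Ha * ‖f₁‖ ≤ ζ * ζ * ‖f₁‖ :=
      mul_le_mul_of_nonneg_right (mul_le_mul hRmζ hHaζ hHa.le (hRm.le.trans hRmζ)) hf₁0
    have k2 : (Ha * Pr * Re * γ) * Ha * ‖f₃‖ ≤ ζ * ζ * ‖f₃‖ :=
      mul_le_mul_of_nonneg_right (mul_le_mul hHγζ hHaζ hHa.le (by positivity)) hf₃0
    have k2' : (Ha * Pr * Re * γ) * Rm * ‖f₃‖ ≤ ζ * ζ * ‖f₃‖ :=
      mul_le_mul_of_nonneg_right (mul_le_mul hHγζ hRmζ hRm.le (by positivity)) hf₃0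
    have k3 : Ha * Rm * ‖f₂‖ ≤ ζ * ζ * ‖f₂‖ :=
      mul_le_mul_of_nonneg_right (mul_le_mul hHaζ hRmζ hRm.le (hHa.le.trans hHaζ)) hf₂0
    have k3' : Rm * Rm * ‖f₂‖ ≤ ζ * ζ * ‖f₂‖ :=
      mul_le_mul_of_nonneg_right (mul_le_mul hRmζ hRmζ hRm.le (hRm.le.trans hRmζ)) hf₂0
    constructor
    · refine hq.1.trans ?_
      have e : Ha * (Ha * (‖f₁‖ + γ * (Pr * Re * ‖f₃‖)) + Rm * ‖f₂‖)
          = Ha * Ha * ‖f₁‖ + (Ha * Pr * Re * γ) * Ha * ‖f₃‖ + Ha * Rm * ‖f₂‖ := by ring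
      have e2 : ζ ^ 2 * (‖f₁‖ + ‖f₂‖ + ‖f₃‖)
          = ζ * ζ * ‖f₁‖ + ζ * ζ * ‖f₂‖ + ζ * ζ * ‖f₃‖ := by ring
      linarith
    · refine hq.2.trans ?_
      have e : Rm * (Ha * (‖f₁‖ + γ * (Pr * Re * ‖f₃‖)) + Rm * ‖f₂‖)
          = Rm * Ha * ‖f₁‖ + (Ha * Pr * Re * γ) * Rm * ‖f₃‖ + Rm * Rm * ‖f₂‖ := by ring
      have e2 : ζ ^ 2 * (‖f₁‖ + ‖f₂‖ + ‖f₃‖)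
          = ζ * ζ * ‖f₁‖ + ζ * ζ * ‖f₂‖ + ζ * ζ * ‖f₃‖ := by ring
      linarith
  -- contraction estimate
  have hlip : ∀ x x' : V × W, dist (Φ x) (Φ x')
      ≤ (max (max M₁ M₂) M₃
          * (12 * ζ ^ 4 * (‖f₁‖ + ‖f₂‖ + ‖f₃‖) + 2 * ζ ^ 2 * Pr * Re * ‖f₃‖)) * dist x x' := by
    intro x x'
    have hD0 : (0:ℝ) ≤ dist x x' := dist_nonneg
    have hud : ‖x.1 - x'.1‖ ≤ dist x x' := by
      rw [← dist_eq_norm, Prod.dist_eq]; exact le_max_left _ _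
    have hbd : ‖x.2 - x'.2‖ ≤ dist x x' := by
      rw [← dist_eq_norm, Prod.dist_eq]; exact le_max_right _ _
    have key : aV ((Φ x).1 - (Φ x').1) ((Φ x).1 - (Φ x').1)
        + aW ((Φ x).2 - (Φ x').2) ((Φ x).2 - (Φ x').2)
        = -(c₁ (x.1 - x'.1) (Φ x').1 ((Φ x).1 - (Φ x').1))
          - c₂ ((Φ x).1 - (Φ x').1) (x.2 - x'.2) (Φ x').2
          + c₂ (Φ x').1 (x.2 - x'.2) ((Φ x).2 - (Φ x').2)
          - G (𝒯 x.1 - 𝒯 x'.1) ((Φ x).1 - (Φ x').1) := by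
      have he1 := hΦ x ((Φ x).1 - (Φ x').1, (Φ x).2 - (Φ x').2)
      have he2 := hΦ x' ((Φ x).1 - (Φ x').1, (Φ x).2 - (Φ x').2)
      have e3 := hc₁_skew x.1 ((Φ x).1 - (Φ x').1)
      simp only [map_sub, LinearMap.sub_apply] at he1 he2 e3 ⊢
      linarith
    have hdT : ‖𝒯 x.1 - 𝒯 x'.1‖ ≤ Pr * Re * (M₃ * ‖x.1 - x'.1‖ * (Pr * Re * ‖f₃‖)) := by
      refine (hTlip x.1 x'.1).trans ?_
      refine mul_le_mul_of_nonneg_left ?_ (by positivity)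
      exact mul_le_mul_of_nonneg_left (hTb x'.1) (mul_nonneg hM₃ (norm_nonneg _))
    have hen : Ha⁻¹ ^ 2 * ‖(Φ x).1 - (Φ x').1‖ ^ 2 + Rm⁻¹ ^ 2 * ‖(Φ x).2 - (Φ x').2‖ ^ 2
        ≤ (M₁ * ‖x.1 - x'.1‖ * (ζ ^ 2 * (‖f₁‖ + ‖f₂‖ + ‖f₃‖))
            + M₂ * ‖x.2 - x'.2‖ * (ζ ^ 2 * (‖f₁‖ + ‖f₂‖ + ‖f₃‖))
            + γ * (Pr * Re * (M₃ * ‖x.1 - x'.1‖ * (Pr * Re * ‖f₃‖)))) * ‖(Φ x).1 - (Φ x').1‖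
          + (M₂ * ‖x.2 - x'.2‖ * (ζ ^ 2 * (‖f₁‖ + ‖f₂‖ + ‖f₃‖))) * ‖(Φ x).2 - (Φ x').2‖ := by
      have b1 : -(c₁ (x.1 - x'.1) (Φ x').1 ((Φ x).1 - (Φ x').1))
          ≤ M₁ * ‖x.1 - x'.1‖ * (ζ ^ 2 * (‖f₁‖ + ‖f₂‖ + ‖f₃‖)) * ‖(Φ x).1 - (Φ x').1‖ := by
        calc -(c₁ (x.1 - x'.1) (Φ x').1 ((Φ x).1 - (Φ x').1))
            ≤ M₁ * ‖x.1 - x'.1‖ * ‖(Φ x').1‖ * ‖(Φ x).1 - (Φ x').1‖ :=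
              (neg_le_abs _).trans (hc₁_bound _ _ _)
        _ ≤ M₁ * ‖x.1 - x'.1‖ * (ζ ^ 2 * (‖f₁‖ + ‖f₂‖ + ‖f₃‖)) * ‖(Φ x).1 - (Φ x').1‖ := by
            refine mul_le_mul_of_nonneg_right ?_ (norm_nonneg _)
            exact mul_le_mul_of_nonneg_left (hρ x').1 (mul_nonneg hM₁ (norm_nonneg _))
      have b2 : -(c₂ ((Φ x).1 - (Φ x').1) (x.2 - x'.2) (Φ x').2)
          ≤ M₂ * ‖x.2 - x'.2‖ * (ζ ^ 2 * (‖f₁‖ + ‖f₂‖ + ‖f₃‖)) * ‖(Φ x).1 - (Φ x').1‖ := by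
        calc -(c₂ ((Φ x).1 - (Φ x').1) (x.2 - x'.2) (Φ x').2)
            ≤ M₂ * ‖(Φ x).1 - (Φ x').1‖ * ‖x.2 - x'.2‖ * ‖(Φ x').2‖ :=
              (neg_le_abs _).trans (hc₂_bound _ _ _)
        _ ≤ M₂ * ‖(Φ x).1 - (Φ x').1‖ * ‖x.2 - x'.2‖ * (ζ ^ 2 * (‖f₁‖ + ‖f₂‖ + ‖f₃‖)) := by
            refine mul_le_mul_of_nonneg_left (hρ x').2 ?_
            exact mul_nonneg (mul_nonneg hM₂ (norm_nonneg _)) (norm_nonneg _)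
        _ = M₂ * ‖x.2 - x'.2‖ * (ζ ^ 2 * (‖f₁‖ + ‖f₂‖ + ‖f₃‖)) * ‖(Φ x).1 - (Φ x').1‖ := by
            ring
      have b3 : c₂ (Φ x').1 (x.2 - x'.2) ((Φ x).2 - (Φ x').2)
          ≤ M₂ * ‖x.2 - x'.2‖ * (ζ ^ 2 * (‖f₁‖ + ‖f₂‖ + ‖f₃‖)) * ‖(Φ x).2 - (Φ x').2‖ := by
        calc c₂ (Φ x').1 (x.2 - x'.2) ((Φ x).2 - (Φ x').2)
            ≤ M₂ * ‖(Φ x').1‖ * ‖x.2 - x'.2‖ * ‖(Φ x).2 - (Φ x').2‖ :=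
              (le_abs_self _).trans (hc₂_bound _ _ _)
        _ ≤ M₂ * (ζ ^ 2 * (‖f₁‖ + ‖f₂‖ + ‖f₃‖)) * ‖x.2 - x'.2‖ * ‖(Φ x).2 - (Φ x').2‖ := by
            refine mul_le_mul_of_nonneg_right ?_ (norm_nonneg _)
            refine mul_le_mul_of_nonneg_right ?_ (norm_nonneg _)
            exact mul_le_mul_of_nonneg_left (hρ x').1 hM₂
        _ = M₂ * ‖x.2 - x'.2‖ * (ζ ^ 2 * (‖f₁‖ + ‖f₂‖ + ‖f₃‖)) * ‖(Φ x).2 - (Φ x').2‖ := by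
            ring
      have b4 : -(G (𝒯 x.1 - 𝒯 x'.1) ((Φ x).1 - (Φ x').1))
          ≤ γ * (Pr * Re * (M₃ * ‖x.1 - x'.1‖ * (Pr * Re * ‖f₃‖))) * ‖(Φ x).1 - (Φ x').1‖ := by
        calc -(G (𝒯 x.1 - 𝒯 x'.1) ((Φ x).1 - (Φ x').1))
            ≤ γ * ‖𝒯 x.1 - 𝒯 x'.1‖ * ‖(Φ x).1 - (Φ x').1‖ :=
              (neg_le_abs _).trans (hG_bound _ _)
        _ ≤ γ * (Pr * Re * (M₃ * ‖x.1 - x'.1‖ * (Pr * Re * ‖f₃‖))) * ‖(Φ x).1 - (Φ x').1‖ := by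
            refine mul_le_mul_of_nonneg_right ?_ (norm_nonneg _)
            exact mul_le_mul_of_nonneg_left hdT hγ.le
      have hcV := haV_coer ((Φ x).1 - (Φ x').1)
      have hcW := haW_coer ((Φ x).2 - (Φ x').2)
      have er : (M₁ * ‖x.1 - x'.1‖ * (ζ ^ 2 * (‖f₁‖ + ‖f₂‖ + ‖f₃‖))
            + M₂ * ‖x.2 - x'.2‖ * (ζ ^ 2 * (‖f₁‖ + ‖f₂‖ + ‖f₃‖))
            + γ * (Pr * Re * (M₃ * ‖x.1 - x'.1‖ * (Pr * Re * ‖f₃‖)))) * ‖(Φ x).1 - (Φ x').1‖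
          = M₁ * ‖x.1 - x'.1‖ * (ζ ^ 2 * (‖f₁‖ + ‖f₂‖ + ‖f₃‖)) * ‖(Φ x).1 - (Φ x').1‖
            + M₂ * ‖x.2 - x'.2‖ * (ζ ^ 2 * (‖f₁‖ + ‖f₂‖ + ‖f₃‖)) * ‖(Φ x).1 - (Φ x').1‖
            + γ * (Pr * Re * (M₃ * ‖x.1 - x'.1‖ * (Pr * Re * ‖f₃‖))) * ‖(Φ x).1 - (Φ x').1‖ := by
        ring
      linarith
    have hp'0 : (0:ℝ) ≤ M₁ * ‖x.1 - x'.1‖ * (ζ ^ 2 * (‖f₁‖ + ‖f₂‖ + ‖f₃‖))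
        + M₂ * ‖x.2 - x'.2‖ * (ζ ^ 2 * (‖f₁‖ + ‖f₂‖ + ‖f₃‖))
        + γ * (Pr * Re * (M₃ * ‖x.1 - x'.1‖ * (Pr * Re * ‖f₃‖))) := by
      have n1 : (0:ℝ) ≤ M₁ * ‖x.1 - x'.1‖ * (ζ ^ 2 * (‖f₁‖ + ‖f₂‖ + ‖f₃‖)) :=
        mul_nonneg (mul_nonneg hM₁ (norm_nonneg _)) (by positivity)
      have n2 : (0:ℝ) ≤ M₂ * ‖x.2 - x'.2‖ * (ζ ^ 2 * (‖f₁‖ + ‖f₂‖ + ‖f₃‖)) :=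
        mul_nonneg (mul_nonneg hM₂ (norm_nonneg _)) (by positivity)
      have n3 : (0:ℝ) ≤ γ * (Pr * Re * (M₃ * ‖x.1 - x'.1‖ * (Pr * Re * ‖f₃‖))) := by
        refine mul_nonneg hγ.le (mul_nonneg (by positivity) ?_)
        exact mul_nonneg (mul_nonneg hM₃ (norm_nonneg _)) (by positivity)
      linarith
    have hq'0 : (0:ℝ) ≤ M₂ * ‖x.2 - x'.2‖ * (ζ ^ 2 * (‖f₁‖ + ‖f₂‖ + ‖f₃‖)) :=
      mul_nonneg (mul_nonneg hM₂ (norm_nonneg _)) (by positivity)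
    have hq := quad_comp_bound hHa hRm (norm_nonneg _) (norm_nonneg _) hp'0 hq'0 hen
    -- final numeric comparison
    have hbig : ∀ s : ℝ, 0 ≤ s → s ≤ ζ →
        s * (Ha * (M₁ * ‖x.1 - x'.1‖ * (ζ ^ 2 * (‖f₁‖ + ‖f₂‖ + ‖f₃‖))
            + M₂ * ‖x.2 - x'.2‖ * (ζ ^ 2 * (‖f₁‖ + ‖f₂‖ + ‖f₃‖))
            + γ * (Pr * Re * (M₃ * ‖x.1 - x'.1‖ * (Pr * Re * ‖f₃‖))))
          + Rm * (M₂ * ‖x.2 - x'.2‖ * (ζ ^ 2 * (‖f₁‖ + ‖f₂‖ + ‖f₃‖))))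
        ≤ (max (max M₁ M₂) M₃
          * (12 * ζ ^ 4 * (‖f₁‖ + ‖f₂‖ + ‖f₃‖) + 2 * ζ ^ 2 * Pr * Re * ‖f₃‖)) * dist x x' := by
      intro s hs0 hsζ
      have hζζ0 : (0:ℝ) ≤ ζ * ζ := by positivity
      have hMD : ∀ (Mi : ℝ), 0 ≤ Mi → Mi ≤ max (max M₁ M₂) M₃ → ∀ (a : ℝ), 0 ≤ a → a ≤ dist x x' →
          ∀ (c : ℝ), 0 ≤ c → Mi * a * c ≤ max (max M₁ M₂) M₃ * dist x x' * c := fun Mi hMi hMix a ha haD c hc =>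
        mul_le_mul_of_nonneg_right (mul_le_mul hMix haD ha hMx0) hc
      have t1 : s * Ha * (M₁ * ‖x.1 - x'.1‖ * (ζ ^ 2 * (‖f₁‖ + ‖f₂‖ + ‖f₃‖)))
          ≤ ζ * ζ * (max (max M₁ M₂) M₃ * dist x x' * (ζ ^ 2 * (‖f₁‖ + ‖f₂‖ + ‖f₃‖))) := by
        refine mul_le_mul (mul_le_mul hsζ hHaζ hHa.le (hs0.trans hsζ))
          (hMD M₁ hM₁ hM₁x _ (norm_nonneg _) hud _ (by positivity)) ?_ hζζ0
        exact mul_nonneg (mul_nonneg hM₁ (norm_nonneg _)) (by positivity)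
      have t2 : s * Ha * (M₂ * ‖x.2 - x'.2‖ * (ζ ^ 2 * (‖f₁‖ + ‖f₂‖ + ‖f₃‖)))
          ≤ ζ * ζ * (max (max M₁ M₂) M₃ * dist x x' * (ζ ^ 2 * (‖f₁‖ + ‖f₂‖ + ‖f₃‖))) := by
        refine mul_le_mul (mul_le_mul hsζ hHaζ hHa.le (hs0.trans hsζ))
          (hMD M₂ hM₂ hM₂x _ (norm_nonneg _) hbd _ (by positivity)) ?_ hζζ0
        exact mul_nonneg (mul_nonneg hM₂ (norm_nonneg _)) (by positivity)
      have t3 : s * Rm * (M₂ * ‖x.2 - x'.2‖ * (ζ ^ 2 * (‖f₁‖ + ‖f₂‖ + ‖f₃‖)))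
          ≤ ζ * ζ * (max (max M₁ M₂) M₃ * dist x x' * (ζ ^ 2 * (‖f₁‖ + ‖f₂‖ + ‖f₃‖))) := by
        refine mul_le_mul (mul_le_mul hsζ hRmζ hRm.le (hs0.trans hsζ))
          (hMD M₂ hM₂ hM₂x _ (norm_nonneg _) hbd _ (by positivity)) ?_ hζζ0
        exact mul_nonneg (mul_nonneg hM₂ (norm_nonneg _)) (by positivity)
      have t4 : (s * (Ha * Pr * Re * γ)) * (M₃ * ‖x.1 - x'.1‖ * (Pr * Re * ‖f₃‖))
          ≤ ζ * ζ * (max (max M₁ M₂) M₃ * dist x x' * (Pr * Re * ‖f₃‖)) := by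
        refine mul_le_mul (mul_le_mul hsζ hHγζ (by positivity) (hs0.trans hsζ))
          (hMD M₃ hM₃ hM₃x _ (norm_nonneg _) hud _ (by positivity)) ?_ hζζ0
        exact mul_nonneg (mul_nonneg hM₃ (norm_nonneg _)) (by positivity)
      have eL : s * (Ha * (M₁ * ‖x.1 - x'.1‖ * (ζ ^ 2 * (‖f₁‖ + ‖f₂‖ + ‖f₃‖))
            + M₂ * ‖x.2 - x'.2‖ * (ζ ^ 2 * (‖f₁‖ + ‖f₂‖ + ‖f₃‖))
            + γ * (Pr * Re * (M₃ * ‖x.1 - x'.1‖ * (Pr * Re * ‖f₃‖))))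
          + Rm * (M₂ * ‖x.2 - x'.2‖ * (ζ ^ 2 * (‖f₁‖ + ‖f₂‖ + ‖f₃‖))))
          = s * Ha * (M₁ * ‖x.1 - x'.1‖ * (ζ ^ 2 * (‖f₁‖ + ‖f₂‖ + ‖f₃‖)))
            + s * Ha * (M₂ * ‖x.2 - x'.2‖ * (ζ ^ 2 * (‖f₁‖ + ‖f₂‖ + ‖f₃‖)))
            + (s * (Ha * Pr * Re * γ)) * (M₃ * ‖x.1 - x'.1‖ * (Pr * Re * ‖f₃‖))
            + s * Rm * (M₂ * ‖x.2 - x'.2‖ * (ζ ^ 2 * (‖f₁‖ + ‖f₂‖ + ‖f₃‖))) := by ring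
      have eR : (max (max M₁ M₂) M₃
          * (12 * ζ ^ 4 * (‖f₁‖ + ‖f₂‖ + ‖f₃‖) + 2 * ζ ^ 2 * Pr * Re * ‖f₃‖)) * dist x x'
          = 12 * (ζ * ζ * (max (max M₁ M₂) M₃ * dist x x' * (ζ ^ 2 * (‖f₁‖ + ‖f₂‖ + ‖f₃‖))))
            + 2 * (ζ * ζ * (max (max M₁ M₂) M₃ * dist x x' * (Pr * Re * ‖f₃‖))) := by ring
      have n1 : (0:ℝ) ≤ ζ * ζ * (max (max M₁ M₂) M₃ * dist x x' * (ζ ^ 2 * (‖f₁‖ + ‖f₂‖ + ‖f₃‖))) :=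
        mul_nonneg hζζ0 (mul_nonneg (mul_nonneg hMx0 hD0) (by positivity))
      have n2 : (0:ℝ) ≤ ζ * ζ * (max (max M₁ M₂) M₃ * dist x x' * (Pr * Re * ‖f₃‖)) :=
        mul_nonneg hζζ0 (mul_nonneg (mul_nonneg hMx0 hD0) (by positivity))
      linarith
    have hdistU : dist (Φ x).1 (Φ x').1
        ≤ (max (max M₁ M₂) M₃
          * (12 * ζ ^ 4 * (‖f₁‖ + ‖f₂‖ + ‖f₃‖) + 2 * ζ ^ 2 * Pr * Re * ‖f₃‖)) * dist x x' := by
      rw [dist_eq_norm]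
      exact hq.1.trans (hbig Ha hHa.le hHaζ)
    have hdistB : dist (Φ x).2 (Φ x').2
        ≤ (max (max M₁ M₂) M₃
          * (12 * ζ ^ 4 * (‖f₁‖ + ‖f₂‖ + ‖f₃‖) + 2 * ζ ^ 2 * Pr * Re * ‖f₃‖)) * dist x x' := by
      rw [dist_eq_norm]
      exact hq.2.trans (hbig Rm hRm.le hRmζ)
    rw [Prod.dist_eq]
    exact max_le hdistU hdistB
  have hκ0 : (0:ℝ) ≤ max (max M₁ M₂) M₃
      * (12 * ζ ^ 4 * (‖f₁‖ + ‖f₂‖ + ‖f₃‖) + 2 * ζ ^ 2 * Pr * Re * ‖f₃‖) :=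
    mul_nonneg hMx0 (by positivity)
  set K : NNReal := Real.toNNReal (max (max M₁ M₂) M₃
      * (12 * ζ ^ 4 * (‖f₁‖ + ‖f₂‖ + ‖f₃‖) + 2 * ζ ^ 2 * Pr * Re * ‖f₃‖)) with hK
  have hCW : ContractingWith K Φ := by
    constructor
    · rw [← NNReal.coe_lt_coe, NNReal.coe_one, hK, Real.coe_toNNReal _ hκ0]
      exact hsmall
    · refine LipschitzWith.of_dist_le_mul fun x y => ?_
      rw [hK, Real.coe_toNNReal _ hκ0]
      exact hlip x y
  haveI : Nonempty (V × W) := ⟨0⟩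
  set xs := ContractingWith.fixedPoint Φ hCW with hxs
  have hfix : Φ xs = xs := hCW.fixedPoint_isFixedPt
  refine ⟨(xs.1, xs.2, 𝒯 xs.1), ⟨?_, ?_⟩, ?_⟩
  · intro v w
    have he := hΦ xs (v, w)
    rw [hfix] at he
    exact he
  · intro z
    exact h𝒯 xs.1 z
  · rintro ⟨yU, yB, yT⟩ ⟨hy1, hy2⟩
    have hyT : yT = 𝒯 yU := h𝒯u yU yT hy2
    have hsol : ∀ t : V × W,
        aV yU t.1 + aW yB t.2 + c₁ yU yU t.1 + c₂ t.1 yB yB - c₂ yU yB t.2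
          = f₁ t.1 + f₂ t.2 - G (𝒯 yU) t.1 := by
      intro t
      rw [← hyT]
      exact hy1 t.1 t.2
    have hyfix : Φ (yU, yB) = (yU, yB) := (hΦu (yU, yB) (yU, yB) hsol).symm
    have hxseq : (yU, yB) = xs := hCW.fixedPoint_unique hyfix
    have e1 : yU = xs.1 := by rw [← hxseq]
    have e2 : yB = xs.2 := by rw [← hxseq]
    rw [hyT, e1, e2]
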